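/- arXiv:1203.1809 — 4 statements merged into one kernel-verified Lean document; each statement's English description precedes it below -/
import Mathlib

section
/- A Groves mechanism r = (r_1,…,r_n) is non-deficit and individually undominated (among non-deficit Groves mechanisms) if and only if for all agents i and all type profiles θ: r_i(θ_{-i}) = inf_{θ'_i ∈ Θ_i} { VCG(θ'_i,θ_{-i}) − Σ_{j≠i} r_j(θ'_{-j}) }, where θ' = (θ'_i, θ_{-i}) and θ'_{-j} denotes the types of agents other than j in θ', and the infimum is taken in ℝ (the set being infimized is assumed nonempty and bounded below). -/
/-!
STATEMENT 6: n ≥ 2 agents, finite nonempty decision set D, nonempty type sets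
Θ i, efficient decision function f. A Groves mechanism r (redistribution
functions r_i independent of the agent's own type) is non-deficit and
individually undominated among non-deficit Groves mechanisms if and only if
for all i and θ:
  r_i(θ_{-i}) = inf_{θ'_i ∈ Θ_i} { VCG(θ'_i,θ_{-i}) − Σ_{j≠i} r_j(θ'_{-j}) },
the infimum being taken in ℝ (the infimized set is nonempty — Θ i is
nonempty — and assumed bounded below).
θ' = (θ'_i, θ_{-i}) = Function.update θ i θ'_i.
-/

noncomputable def VCGi {n : ℕ} {D : Type} [Fintype D] [Nonempty D]
    {Θ : Fin n → Type} (v : ∀ i, D → Θ i → ℝ) (f : (∀ i, Θ i) → D)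
    (i : Fin n) (θ : ∀ j, Θ j) : ℝ :=
  (Finset.univ.sup' Finset.univ_nonempty fun d =>
      ∑ j ∈ Finset.univ.erase i, v j d (θ j)) -
    ∑ j ∈ Finset.univ.erase i, v j (f θ) (θ j)

noncomputable def VCGtot {n : ℕ} {D : Type} [Fintype D] [Nonempty D]
    {Θ : Fin n → Type} (v : ∀ i, D → Θ i → ℝ) (f : (∀ i, Θ i) → D)
    (θ : ∀ j, Θ j) : ℝ :=
  ∑ i, VCGi v f i θ

theorem stmt_6 {n : ℕ} (hn : 2 ≤ n) {D : Type} [Fintype D] [Nonempty D]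
    {Θ : Fin n → Type} [∀ i, Nonempty (Θ i)]
    (v : ∀ i, D → Θ i → ℝ) (f : (∀ i, Θ i) → D)
    (hf : ∀ (θ : ∀ j, Θ j) (d : D),
      ∑ i, v i d (θ i) ≤ ∑ i, v i (f θ) (θ i))
    (r : ∀ _ : Fin n, (∀ j, Θ j) → ℝ)
    (hind : ∀ (i : Fin n) (θ θ' : ∀ j, Θ j),
      (∀ j, j ≠ i → θ j = θ' j) → r i θ = r i θ')
    (hbdd : ∀ (i : Fin n) (θ : ∀ j, Θ j),
      BddBelow {y : ℝ | ∃ x : Θ i, y = VCGtot v f (Function.update θ i x) -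
        ∑ j ∈ Finset.univ.erase i, r j (Function.update θ i x)}) :
    ((∀ θ : ∀ j, Θ j, ∑ i, r i θ ≤ VCGtot v f θ) ∧
      ¬ ∃ r' : ∀ _ : Fin n, (∀ j, Θ j) → ℝ,
        (∀ (i : Fin n) (θ θ' : ∀ j, Θ j),
          (∀ j, j ≠ i → θ j = θ' j) → r' i θ = r' i θ') ∧
        (∀ θ : ∀ j, Θ j, ∑ i, r' i θ ≤ VCGtot v f θ) ∧
        (∀ (i : Fin n) (θ : ∀ j, Θ j), r i θ ≤ r' i θ) ∧
        (∃ (i : Fin n) (θ : ∀ j, Θ j), r i θ < r' i θ)) ↔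
    (∀ (i : Fin n) (θ : ∀ j, Θ j),
      r i θ = sInf {y : ℝ | ∃ x : Θ i, y = VCGtot v f (Function.update θ i x) -
        ∑ j ∈ Finset.univ.erase i, r j (Function.update θ i x)}) := by
  classical
  set S : Fin n → (∀ j, Θ j) → Set ℝ := fun i θ =>
    {y : ℝ | ∃ x : Θ i, y = VCGtot v f (Function.update θ i x) -
        ∑ j ∈ Finset.univ.erase i, r j (Function.update θ i x)} with hS
  have hne : ∀ (i : Fin n) (θ : ∀ j, Θ j), (S i θ).Nonempty := fun i θ =>
    ⟨_, ⟨Classical.arbitrary (Θ i), rfl⟩⟩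
  have hself : ∀ (i : Fin n) (θ : ∀ j, Θ j),
      (VCGtot v f θ - ∑ j ∈ Finset.univ.erase i, r j θ) ∈ S i θ := by
    intro i θ
    exact ⟨θ i, by rw [Function.update_eq_self]⟩
  have hSind : ∀ (i : Fin n) (θ θ' : ∀ j, Θ j),
      (∀ j, j ≠ i → θ j = θ' j) → S i θ = S i θ' := by
    intro i θ θ' h
    have : ∀ x : Θ i, Function.update θ i x = Function.update θ' i x := by
      intro x
      funext k
      by_cases hk : k = i
      · subst hk; simp
      · simp [Function.update_of_ne hk, h k hk]
    simp only [hS, this]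
  have key : (∀ θ : ∀ j, Θ j, ∑ i, r i θ ≤ VCGtot v f θ) →
      ∀ (i : Fin n) (θ : ∀ j, Θ j), r i θ ≤ sInf (S i θ) := by
    intro hnd i θ
    apply le_csInf (hne i θ)
    rintro y ⟨x, rfl⟩
    have h1 : r i (Function.update θ i x) = r i θ := by
      apply hind
      intro j hj
      simp [Function.update_of_ne hj]
    have h2 := hnd (Function.update θ i x)
    rw [← Finset.sum_erase_add _ _ (Finset.mem_univ i)] at h2
    linarith
  constructor
  · rintro ⟨hnd, hundo⟩ i θ
    refine le_antisymm (key hnd i θ) ?_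
    by_contra hlt
    push_neg at hlt
    apply hundo
    refine ⟨fun j θ' => if j = i then sInf (S i θ') else r j θ', ?_, ?_, ?_, ?_⟩
    · intro j θ₁ θ₂ hagree
      by_cases hj : j = i
      · subst hj; simp [hSind j θ₁ θ₂ hagree]
      · simp [hj, hind j θ₁ θ₂ hagree]
    · intro θ₁
      rw [← Finset.sum_erase_add _ _ (Finset.mem_univ i)]
      have hsum : ∑ j ∈ Finset.univ.erase i,
          (if j = i then sInf (S i θ₁) else r j θ₁) = ∑ j ∈ Finset.univ.erase i, r j θ₁ := by
        apply Finset.sum_congr rfl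
        intro j hj
        simp [Finset.ne_of_mem_erase hj]
      beta_reduce; rw [hsum, if_pos rfl]
      have h5 : sInf (S i θ₁) ≤ VCGtot v f θ₁ - ∑ j ∈ Finset.univ.erase i, r j θ₁ :=
        csInf_le (hbdd i θ₁) (hself i θ₁)
      linarith
    · intro j θ₁
      by_cases hj : j = i
      · subst hj; beta_reduce; rw [if_pos rfl]; exact key hnd j θ₁
      · simp [hj]
    · exact ⟨i, θ, by beta_reduce; rw [if_pos rfl]; exact hlt⟩
  · intro heq
    have hnd : ∀ θ : ∀ j, Θ j, ∑ i, r i θ ≤ VCGtot v f θ := by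
      intro θ
      have := csInf_le (hbdd (⟨0, by omega⟩ : Fin n) θ) (hself _ θ)
      rw [← heq _ θ] at this
      rw [← Finset.sum_erase_add _ _ (Finset.mem_univ (⟨0, by omega⟩ : Fin n))]
      linarith
    refine ⟨hnd, ?_⟩
    rintro ⟨r', hind', hnd', hge, i, θ, hstrict⟩
    have : r' i θ ≤ r i θ := by
      rw [heq i θ]
      apply le_csInf (hne i θ)
      rintro y ⟨x, rfl⟩
      have h1 : r' i (Function.update θ i x) = r' i θ := by
        apply hind'
        intro j hj
        simp [Function.update_of_ne hj]
      have h2 := hnd' (Function.update θ i x)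
      rw [← Finset.sum_erase_add _ _ (Finset.mem_univ i)] at h2
      have h3 : ∑ j ∈ Finset.univ.erase i, r j (Function.update θ i x) ≤
          ∑ j ∈ Finset.univ.erase i, r' j (Function.update θ i x) :=
        Finset.sum_le_sum fun j _ => hge j _
      linarith
    linarith
end

section
/- Let r = (r_1,…,r_n) be a non-deficit Groves mechanism, let π be a permutation of {1,…,n} (a priority order, where π(i) is agent i's priority value and lower values mean higher priority), and let r^π be defined recursively by: for k = 1,…,n, setting i = π^{-1}(k), r^π_i(θ_{-i}) := inf_{θ'_i ∈ Θ_i} { VCG(θ'_i,θ_{-i}) − Σ_{j : π(j) > k} r_j(θ'_{-j}) − Σ_{j : π(j) < k} r^π_j(θ'_{-j}) }, where θ' = (θ'_i,θ_{-i}) and all these infima are assumed to exist in ℝ. Then r^π_i(θ_{-i}) ≥ r_i(θ_{-i}) for all agents i and all θ_{-i}. -/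
theorem stmt_7 {n : ℕ} (hn : 2 ≤ n) {D : Type} [Fintype D] [Nonempty D]
    {Θ : Fin n → Type} [∀ i, Nonempty (Θ i)]
    (v : ∀ i, D → Θ i → ℝ) (f : (∀ i, Θ i) → D)
    (hf : ∀ (θ : ∀ j, Θ j) (d : D),
      ∑ i, v i d (θ i) ≤ ∑ i, v i (f θ) (θ i))
    (r : ∀ _ : Fin n, (∀ j, Θ j) → ℝ)
    (hind : ∀ (i : Fin n) (θ θ' : ∀ j, Θ j),
      (∀ j, j ≠ i → θ j = θ' j) → r i θ = r i θ')
    (hnd : ∀ θ : ∀ j, Θ j, ∑ i, r i θ ≤ VCGtot v f θ)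
    (π : Equiv.Perm (Fin n))
    (rπ : ∀ _ : Fin n, (∀ j, Θ j) → ℝ)
    (hindπ : ∀ (i : Fin n) (θ θ' : ∀ j, Θ j),
      (∀ j, j ≠ i → θ j = θ' j) → rπ i θ = rπ i θ')
    (hrπ : ∀ (i : Fin n) (θ : ∀ j, Θ j),
      IsGLB {y : ℝ | ∃ x : Θ i, y = VCGtot v f (Function.update θ i x) -
          ∑ j ∈ Finset.univ.filter (fun j => π i < π j), r j (Function.update θ i x) -
          ∑ j ∈ Finset.univ.filter (fun j => π j < π i), rπ j (Function.update θ i x)}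
        (rπ i θ)) :
    ∀ (i : Fin n) (θ : ∀ j, Θ j), r i θ ≤ rπ i θ := by
  -- invariant: at stage k, mixing rπ for priorities < k with r for priorities ≥ k
  -- is still non-deficit
  have key : ∀ k : ℕ, ∀ θ : ∀ j, Θ j,
      (∑ j ∈ Finset.univ.filter (fun j => (π j : ℕ) < k), rπ j θ) +
      (∑ j ∈ Finset.univ.filter (fun j => k ≤ (π j : ℕ)), r j θ) ≤ VCGtot v f θ := by
    intro k
    induction k with
    | zero =>
      intro θ
      simpa using hnd θ
    | succ k ih =>
      intro θ
      by_cases hex : ∃ i : Fin n, (π i : ℕ) = k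
      · obtain ⟨i, hi⟩ := hex
        -- rπ i θ is ≤ the element of the set at x = θ i
        have hmem : VCGtot v f θ -
            (∑ j ∈ Finset.univ.filter (fun j => π i < π j), r j θ) -
            (∑ j ∈ Finset.univ.filter (fun j => π j < π i), rπ j θ) ∈
            {y : ℝ | ∃ x : Θ i, y = VCGtot v f (Function.update θ i x) -
              ∑ j ∈ Finset.univ.filter (fun j => π i < π j), r j (Function.update θ i x) -
              ∑ j ∈ Finset.univ.filter (fun j => π j < π i), rπ j (Function.update θ i x)} := by
          exact ⟨θ i, by rw [Function.update_eq_self]⟩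
        have hle := (hrπ i θ).1 hmem
        -- set identities
        have hinj : ∀ j : Fin n, (π j : ℕ) = k → j = i := by
          intro j hj
          have : π j = π i := Fin.ext (by omega)
          exact π.injective this
        have h1 : (Finset.univ.filter (fun j => (π j : ℕ) < k + 1))
            = insert i (Finset.univ.filter (fun j : Fin n => π j < π i)) := by
          ext j
          simp only [Finset.mem_filter, Finset.mem_insert, Finset.mem_univ, true_and,
            Fin.lt_def]
          constructor
          · intro h
            rcases Nat.lt_succ_iff_lt_or_eq.mp h with h | h
            · right; omega
            · left; exact hinj j h
          · rintro (rfl | h) <;> omega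
        have h2 : (Finset.univ.filter (fun j => k ≤ (π j : ℕ)))
            = insert i (Finset.univ.filter (fun j : Fin n => π i < π j)) := by
          ext j
          simp only [Finset.mem_filter, Finset.mem_insert, Finset.mem_univ, true_and,
            Fin.lt_def]
          constructor
          · intro h
            rcases Nat.lt_or_ge k (π j : ℕ) with h' | h'
            · right; omega
            · left; exact hinj j (by omega)
          · rintro (rfl | h) <;> omega
        have h3 : (Finset.univ.filter (fun j => k + 1 ≤ (π j : ℕ)))
            = Finset.univ.filter (fun j : Fin n => π i < π j) := by
          ext j
          simp only [Finset.mem_filter, Finset.mem_univ, true_and, Fin.lt_def]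
          omega
        have hni1 : i ∉ Finset.univ.filter (fun j : Fin n => π j < π i) := by
          simp
        have hni2 : i ∉ Finset.univ.filter (fun j : Fin n => π i < π j) := by
          simp
        rw [h1, h3, Finset.sum_insert hni1]
        linarith
      · push_neg at hex
        have h1 : (Finset.univ.filter (fun j => (π j : ℕ) < k + 1))
            = Finset.univ.filter (fun j => (π j : ℕ) < k) := by
          ext j
          simp only [Finset.mem_filter, Finset.mem_univ, true_and]
          have := hex j
          omega
        have h2 : (Finset.univ.filter (fun j => k + 1 ≤ (π j : ℕ)))
            = Finset.univ.filter (fun j => k ≤ (π j : ℕ)) := by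
          ext j
          simp only [Finset.mem_filter, Finset.mem_univ, true_and]
          have := hex j
          omega
        rw [h1, h2]
        exact ih θ
  -- main conclusion
  intro i θ
  refine (hrπ i θ).2 ?_
  rintro y ⟨x, rfl⟩
  set θ' := Function.update θ i x with hθ'
  have hri : r i θ = r i θ' := by
    apply hind
    intro j hj
    exact (Function.update_of_ne hj x θ).symm
  have hkey := key (π i : ℕ) θ'
  have h4 : (Finset.univ.filter (fun j => (π j : ℕ) < (π i : ℕ)))
      = Finset.univ.filter (fun j : Fin n => π j < π i) := by
    ext j
    simp only [Finset.mem_filter, Finset.mem_univ, true_and]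
    exact Fin.lt_def.symm
  have h5 : (Finset.univ.filter (fun j => (π i : ℕ) ≤ (π j : ℕ)))
      = insert i (Finset.univ.filter (fun j : Fin n => π i < π j)) := by
    ext j
    simp only [Finset.mem_filter, Finset.mem_insert, Finset.mem_univ, true_and, Fin.lt_def]
    constructor
    · intro h
      rcases Nat.lt_or_ge (π i : ℕ) (π j : ℕ) with h' | h'
      · right; omega
      · left
        have : π j = π i := Fin.ext (by omega)
        exact π.injective this
    · rintro (rfl | h) <;> omega
  have hni : i ∉ Finset.univ.filter (fun j : Fin n => π i < π j) := by simp
  rw [h4, h5, Finset.sum_insert hni] at hkey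
  linarith [hkey, hri.ge]
end

section
/- Let r = (r_1,…,r_n) be a non-deficit Groves mechanism, π a permutation of {1,…,n}, and r^π the priority-based transform defined recursively by: for k = 1,…,n, with i = π^{-1}(k), r^π_i(θ_{-i}) := inf_{θ'_i ∈ Θ_i} { VCG(θ'_i,θ_{-i}) − Σ_{j : π(j) > k} r_j(θ'_{-j}) − Σ_{j : π(j) < k} r^π_j(θ'_{-j}) }, where all these infima are assumed to exist in ℝ. Then r^π is a non-deficit Groves mechanism that is individually undominated among non-deficit Groves mechanisms. -/
theorem stmt_8 {n : ℕ} (hn : 2 ≤ n) {D : Type} [Fintype D] [Nonempty D]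
    {Θ : Fin n → Type} [∀ i, Nonempty (Θ i)]
    (v : ∀ i, D → Θ i → ℝ) (f : (∀ i, Θ i) → D)
    (hf : ∀ (θ : ∀ j, Θ j) (d : D),
      ∑ i, v i d (θ i) ≤ ∑ i, v i (f θ) (θ i))
    (r : ∀ _ : Fin n, (∀ j, Θ j) → ℝ)
    (hind : ∀ (i : Fin n) (θ θ' : ∀ j, Θ j),
      (∀ j, j ≠ i → θ j = θ' j) → r i θ = r i θ')
    (hnd : ∀ θ : ∀ j, Θ j, ∑ i, r i θ ≤ VCGtot v f θ)
    (π : Equiv.Perm (Fin n))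
    (rπ : ∀ _ : Fin n, (∀ j, Θ j) → ℝ)
    (hindπ : ∀ (i : Fin n) (θ θ' : ∀ j, Θ j),
      (∀ j, j ≠ i → θ j = θ' j) → rπ i θ = rπ i θ')
    (hrπ : ∀ (i : Fin n) (θ : ∀ j, Θ j),
      IsGLB {y : ℝ | ∃ x : Θ i, y = VCGtot v f (Function.update θ i x) -
          ∑ j ∈ Finset.univ.filter (fun j => π i < π j), r j (Function.update θ i x) -
          ∑ j ∈ Finset.univ.filter (fun j => π j < π i), rπ j (Function.update θ i x)}
        (rπ i θ)) :
    (∀ θ : ∀ j, Θ j, ∑ i, rπ i θ ≤ VCGtot v f θ) ∧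
    ¬ ∃ r' : ∀ _ : Fin n, (∀ j, Θ j) → ℝ,
      (∀ (i : Fin n) (θ θ' : ∀ j, Θ j),
        (∀ j, j ≠ i → θ j = θ' j) → r' i θ = r' i θ') ∧
      (∀ θ : ∀ j, Θ j, ∑ i, r' i θ ≤ VCGtot v f θ) ∧
      (∀ (i : Fin n) (θ : ∀ j, Θ j), rπ i θ ≤ r' i θ) ∧
      (∃ (i : Fin n) (θ : ∀ j, Θ j), rπ i θ < r' i θ) := by
  classical
  -- splitting a sum over all agents by priority relative to i
  have hsplit : ∀ (i : Fin n) (g : Fin n → ℝ),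
      ∑ j, g j = g i + (∑ j ∈ Finset.univ.filter (fun j => π j < π i), g j)
        + (∑ j ∈ Finset.univ.filter (fun j => π i < π j), g j) := by
    intro i g
    have h1 : (Finset.univ.filter (fun j => ¬ π j < π i))
        = insert i (Finset.univ.filter (fun j => π i < π j)) := by
      ext j
      simp only [Finset.mem_filter, Finset.mem_univ, true_and, Finset.mem_insert, not_lt]
      constructor
      · intro h
        rcases lt_or_eq_of_le h with h' | h'
        · exact Or.inr h'
        · exact Or.inl (π.injective h'.symm)
      · rintro (rfl | h)
        · exact le_refl _
        · exact h.le
    rw [← Finset.sum_filter_add_sum_filter_not Finset.univ (fun j => π j < π i) g, h1,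
      Finset.sum_insert (by simp)]
    ring
  -- the GLB is at most the element obtained from x = θ i
  have keyC : ∀ (i : Fin n) (θ : ∀ j, Θ j),
      rπ i θ ≤ VCGtot v f θ
        - ∑ j ∈ Finset.univ.filter (fun j => π i < π j), r j θ
        - ∑ j ∈ Finset.univ.filter (fun j => π j < π i), rπ j θ :=
    fun i θ => (hrπ i θ).1 ⟨θ i, by rw [Function.update_eq_self]⟩
  -- r is pointwise dominated by rπ
  have lemA : ∀ (i : Fin n) (θ : ∀ j, Θ j), r i θ ≤ rπ i θ := by
    intro i θ
    refine (hrπ i θ).2 ?_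
    rintro y ⟨x, rfl⟩
    have hri : r i (Function.update θ i x) = r i θ :=
      hind i (Function.update θ i x) θ (fun j hj => Function.update_of_ne hj x θ)
    rcases Nat.eq_zero_or_eq_succ_pred (π i : ℕ) with h0 | hsucc
    · -- lowest priority: use non-deficit of r directly
      have hempt : Finset.univ.filter (fun j => π j < π i) = ∅ := by
        refine Finset.filter_eq_empty_iff.mpr fun j _ => ?_
        intro hlt
        have : (π j : ℕ) < (π i : ℕ) := hlt
        omega
      have hsum := hnd (Function.update θ i x)
      rw [hsplit i (fun j => r j (Function.update θ i x))] at hsum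
      rw [hempt, Finset.sum_empty] at hsum ⊢
      linarith
    · -- use keyC at the priority predecessor i'
      set k : ℕ := (π i : ℕ) - 1 with hk
      have hπi : (π i : ℕ) = k + 1 := hsucc
      have hkn : k < n := by have := (π i).isLt; omega
      set i' : Fin n := π.symm ⟨k, hkn⟩ with hi'
      have hπi' : (π i' : ℕ) = k := by simp [hi']
      have hmemi' : ∀ j : Fin n, j = i' ↔ (π j : ℕ) = k := by
        intro j
        rw [← Equiv.apply_eq_iff_eq π, Fin.ext_iff, hπi']
      have hmemi : ∀ j : Fin n, j = i ↔ (π j : ℕ) = k + 1 := by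
        intro j
        rw [← Equiv.apply_eq_iff_eq π, Fin.ext_iff, hπi]
      have ha : Finset.univ.filter (fun j => π j < π i)
          = insert i' (Finset.univ.filter (fun j => π j < π i')) := by
        ext j
        simp only [Finset.mem_filter, Finset.mem_univ, true_and, Finset.mem_insert,
          hmemi' j, Fin.lt_def, hπi, hπi']
        omega
      have hb : Finset.univ.filter (fun j => π i' < π j)
          = insert i (Finset.univ.filter (fun j => π i < π j)) := by
        ext j
        simp only [Finset.mem_filter, Finset.mem_univ, true_and, Finset.mem_insert,
          hmemi j, Fin.lt_def, hπi, hπi']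
        omega
      have hkey := keyC i' (Function.update θ i x)
      have hnoti : i ∉ Finset.univ.filter (fun j => π i < π j) := by
        simp only [Finset.mem_filter, Finset.mem_univ, true_and]
        exact lt_irrefl _
      have hnoti' : i' ∉ Finset.univ.filter (fun j => π j < π i') := by
        simp only [Finset.mem_filter, Finset.mem_univ, true_and]
        exact lt_irrefl _
      rw [hb, Finset.sum_insert hnoti] at hkey
      rw [ha, Finset.sum_insert hnoti']
      linarith
  -- non-deficit of rπ
  have hndπ : ∀ θ : ∀ j, Θ j, ∑ i, rπ i θ ≤ VCGtot v f θ := by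
    intro θ
    have hn0 : 0 < n := by omega
    set i0 : Fin n := π.symm ⟨n - 1, by omega⟩ with hi0
    have hπi0 : (π i0 : ℕ) = n - 1 := by simp [hi0]
    have hempty : Finset.univ.filter (fun j => π i0 < π j) = ∅ := by
      refine Finset.filter_eq_empty_iff.mpr fun j _ => ?_
      intro hlt
      have h1 : (π i0 : ℕ) < (π j : ℕ) := hlt
      have h3 : (π j : ℕ) < n := (π j).isLt
      omega
    have hmem := keyC i0 θ
    rw [hempty, Finset.sum_empty] at hmem
    rw [hsplit i0 (fun j => rπ j θ), hempty, Finset.sum_empty]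
    linarith
  refine ⟨hndπ, ?_⟩
  rintro ⟨r', hind', hnd', hge, i, θ0, hlt⟩
  have hnotlb : r' i θ0 ∉ lowerBounds {y : ℝ | ∃ x : Θ i,
      y = VCGtot v f (Function.update θ0 i x)
        - ∑ j ∈ Finset.univ.filter (fun j => π i < π j), r j (Function.update θ0 i x)
        - ∑ j ∈ Finset.univ.filter (fun j => π j < π i), rπ j (Function.update θ0 i x)} :=
    fun h => absurd ((hrπ i θ0).2 h) (not_le.2 hlt)
  obtain ⟨y, hyS, hylt⟩ : ∃ y ∈ {y : ℝ | ∃ x : Θ i,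
      y = VCGtot v f (Function.update θ0 i x)
        - ∑ j ∈ Finset.univ.filter (fun j => π i < π j), r j (Function.update θ0 i x)
        - ∑ j ∈ Finset.univ.filter (fun j => π j < π i), rπ j (Function.update θ0 i x)},
      y < r' i θ0 := by
    by_contra h
    push_neg at h
    exact hnotlb fun y hy => h y hy
  obtain ⟨x, rfl⟩ := hyS
  have hri : r' i (Function.update θ0 i x) = r' i θ0 :=
    hind' i (Function.update θ0 i x) θ0 (fun j hj => Function.update_of_ne hj x θ0)
  have hsum := hnd' (Function.update θ0 i x)
  rw [hsplit i (fun j => r' j (Function.update θ0 i x))] at hsum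
  have h1 : ∑ j ∈ Finset.univ.filter (fun j => π j < π i), rπ j (Function.update θ0 i x)
      ≤ ∑ j ∈ Finset.univ.filter (fun j => π j < π i), r' j (Function.update θ0 i x) :=
    Finset.sum_le_sum fun j _ => hge j _
  have h2 : ∑ j ∈ Finset.univ.filter (fun j => π i < π j), r j (Function.update θ0 i x)
      ≤ ∑ j ∈ Finset.univ.filter (fun j => π i < π j), r' j (Function.update θ0 i x) :=
    Finset.sum_le_sum fun j _ => (lemA j _).trans (hge j _)
  linarith
end

section
/- Let r = (r_1,…,r_n) be a Groves mechanism such that for every agent i and every θ_{-i} ∈ Θ_{-i} there exists b*_i ∈ Θ_i with VCG_i(b*_i, θ_{-i}) − r_i(θ_{-i}) = 0. Then for every pay-only Groves mechanism r' = (r'_1,…,r'_n), we have r'_i(θ_{-i}) ≤ r_i(θ_{-i}) for all i and all θ_{-i}; consequently, r individually dominates every pay-only Groves mechanism that differs from r. -/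
theorem stmt_17 {n : ℕ} (hn : 2 ≤ n) {D : Type} [Fintype D] [Nonempty D]
    {Θ : Fin n → Type} [∀ i, Nonempty (Θ i)]
    (v : ∀ i, D → Θ i → ℝ) (f : (∀ i, Θ i) → D)
    (hf : ∀ (θ : ∀ j, Θ j) (d : D),
      ∑ i, v i d (θ i) ≤ ∑ i, v i (f θ) (θ i))
    (r : ∀ _ : Fin n, (∀ j, Θ j) → ℝ)
    (hind : ∀ (i : Fin n) (θ θ' : ∀ j, Θ j),
      (∀ j, j ≠ i → θ j = θ' j) → r i θ = r i θ')
    (hstar : ∀ (i : Fin n) (θ : ∀ j, Θ j), ∃ b : Θ i,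
      VCGi v f i (Function.update θ i b) - r i (Function.update θ i b) = 0) :
    ∀ r' : ∀ _ : Fin n, (∀ j, Θ j) → ℝ,
      (∀ (i : Fin n) (θ θ' : ∀ j, Θ j),
        (∀ j, j ≠ i → θ j = θ' j) → r' i θ = r' i θ') →
      -- r' is pay-only
      (∀ (i : Fin n) (θ : ∀ j, Θ j), r' i θ ≤ VCGi v f i θ) →
      (∀ (i : Fin n) (θ : ∀ j, Θ j), r' i θ ≤ r i θ) ∧
      ((∃ (i : Fin n) (θ : ∀ j, Θ j), r' i θ ≠ r i θ) →
        ((∀ (i : Fin n) (θ : ∀ j, Θ j), r' i θ ≤ r i θ) ∧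
          (∃ (i : Fin n) (θ : ∀ j, Θ j), r' i θ < r i θ))) := by
  intro r' hind' hpay
  have key : ∀ (i : Fin n) (θ : ∀ j, Θ j), r' i θ ≤ r i θ := by
    intro i θ
    obtain ⟨b, hb⟩ := hstar i θ
    have h1 : r i θ = r i (Function.update θ i b) :=
      hind i θ _ (fun j hj => (Function.update_of_ne hj b θ).symm)
    have h2 : r' i θ = r' i (Function.update θ i b) :=
      hind' i θ _ (fun j hj => (Function.update_of_ne hj b θ).symm)
    rw [h1, h2]
    have := hpay i (Function.update θ i b)
    linarith
  refine ⟨key, fun ⟨i, θ, hne⟩ => ⟨key, i, θ, lt_of_le_of_ne (key i θ) hne⟩⟩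
end
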